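/- Let H be a complex Hilbert space and let A, B be bounded linear operators on H with 0 ≤ A ≤ B (i.e., A and B are positive and B − A is positive). If B has a Moore–Penrose inverse, then range(A) ⊆ range(B). -/

import Mathlib

open ContinuousLinearMap

variable {H : Type*} [NormedAddCommGroup H] [InnerProductSpace ℂ H] [CompleteSpace H]

set_option synthInstance.maxHeartbeats 1000000 in
/-- A positive operator vanishing on the quadratic form vanishes. -/
theorem aux_pos_inner_zero (A : H →L[ℂ] H) (hA : A.IsPositive) (z : H)
    (h : inner ℂ (A z) z = (0:ℂ)) : A z = 0 := by
  rw [← A.nonneg_iff_isPositive] at hA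
  set s := CFC.sqrt A with hs
  have hmul : s * s = A := CFC.sqrt_mul_sqrt_self A hA
  have hsa : IsSelfAdjoint s := IsSelfAdjoint.of_nonneg (CFC.sqrt_nonneg (a := A))
  rw [← hmul, ContinuousLinearMap.mul_apply, show s (s z) = (adjoint s) (s z) by
    rw [hsa.adjoint_eq], adjoint_inner_left] at h
  have hz : s z = 0 := inner_self_eq_zero.mp h
  rw [← hmul, ContinuousLinearMap.mul_apply, hz, map_zero]

/-- `X` is a Moore–Penrose inverse of `T`. -/
def IsMPInv (T X : H →L[ℂ] H) : Prop :=
  T ∘L X ∘L T = T ∧ X ∘L T ∘L X = X ∧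
    adjoint (T ∘L X) = T ∘L X ∧ adjoint (X ∘L T) = X ∘L T

/-- If `0 ≤ A ≤ B` and `B` is M-P invertible, then `range A ⊆ range B`. -/
theorem range_subset_of_le (A B : H →L[ℂ] H) (hA : A.IsPositive) (hB : B.IsPositive)
    (hBA : (B - A).IsPositive) (hMP : ∃ X, IsMPInv B X) :
    Set.range ⇑A ⊆ Set.range ⇑B := by
  obtain ⟨X, h1, -, -, -⟩ := hMP
  have hAsym : ∀ x y : H, (inner ℂ (A x) y : ℂ) = inner ℂ x (A y) := fun x y =>
    hA.isSelfAdjoint.isSymmetric x y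
  have hBsym : ∀ x y : H, (inner ℂ (B x) y : ℂ) = inner ℂ x (B y) := fun x y =>
    hB.isSelfAdjoint.isSymmetric x y
  -- range B is closed
  have hfix : ∀ u : H, B (X (B u)) = B u := fun u => by
    have := DFunLike.congr_fun h1 u; simpa using this
  have hset : Set.range ⇑B = {y : H | B (X y) = y} := by
    ext y
    constructor
    · rintro ⟨u, rfl⟩; exact hfix u
    · intro hy; exact ⟨X y, hy⟩
  have hclosed : IsClosed (Set.range ⇑B) := by
    rw [hset]
    exact isClosed_eq (B.continuous.comp X.continuous) continuous_id
  -- kernel inclusion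
  have hker : ∀ z : H, B z = 0 → A z = 0 := by
    intro z hz
    have hre : RCLike.re (inner ℂ (A z) z : ℂ) ≤ 0 := by
      have := hBA.inner_nonneg_left z
      simp only [ContinuousLinearMap.sub_apply, hz, zero_sub, inner_neg_left, map_neg,
        Left.nonneg_neg_iff] at this
      have h2 := (Complex.nonneg_iff.mp this).1
      rw [Complex.neg_re] at h2
      show (inner ℂ (A z) z).re ≤ 0
      linarith
    have hre' : (0:ℝ) ≤ RCLike.re (inner ℂ (A z) z : ℂ) := (Complex.nonneg_iff.mp (hA.inner_nonneg_left z)).1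
    have hreal : (starRingEnd ℂ) (inner ℂ (A z) z : ℂ) = inner ℂ (A z) z := by
      rw [inner_conj_symm]
      exact (hAsym z z).symm
    have him : inner ℂ (A z) z = (0:ℂ) := by
      apply Complex.ext
      · exact le_antisymm hre hre'
      · simpa using Complex.conj_eq_iff_im.mp hreal
    exact aux_pos_inner_zero A hA z him
  -- orthogonal complement argument
  rintro y ⟨u, rfl⟩
  set K : Submodule ℂ H := LinearMap.range (B : H →ₗ[ℂ] H) with hK
  have hKset : (K : Set H) = Set.range ⇑B := by
    ext x; simp [hK, LinearMap.mem_range]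
  have hKclosed : IsClosed (K : Set H) := hKset ▸ hclosed
  haveI : CompleteSpace K := hKclosed.completeSpace_coe
  have hmem : A u ∈ Kᗮᗮ := by
    rw [Submodule.mem_orthogonal]
    intro z hz
    have hBz : B z = 0 := by
      have h0 : inner ℂ (B (B z)) z = (0:ℂ) :=
        (Submodule.mem_orthogonal K z).mp hz (B (B z)) ⟨B z, rfl⟩
      have : inner ℂ (B z) (B z) = (0:ℂ) := by
        rw [← hBsym (B z) z]; exact h0
      exact inner_self_eq_zero.mp this
    have hAz : A z = 0 := hker z hBz
    calc (inner ℂ z (A u) : ℂ) = inner ℂ (A z) u := (hAsym z u).symm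
      _ = 0 := by rw [hAz]; simp
  rw [Submodule.orthogonal_orthogonal] at hmem
  rw [← hKset]
  exact hmem
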